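/- Let M be a 4×4 real symmetric positive semidefinite matrix with all diagonal entries equal to 1, and let V ∈ ℝ⁴ with entries c₁, c₂, c₃, c₄ be such that M − V Vᵀ is positive semidefinite. If M₁₂ = M₃₄ = d, then |c₁ + c₂ + c₃ − c₄| ≤ √(2(1 + d)) + √(2(1 − d)). -/

import Mathlib

open scoped Matrix


/-- For a 4×4 real symmetric PSD matrix `M` with unit diagonal and a
correlator vector `V` with `M - V Vᵀ` PSD, if `M₁₂ = M₃₄ = d` then the Bell-CHSH
parameter satisfies `|c₁ + c₂ + c₃ - c₄| ≤ √(2(1 + d)) + √(2(1 - d))`. -/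
theorem chsh_tsallis_bound_of_covariance
    (M : Matrix (Fin 4) (Fin 4) ℝ) (hM : M.PosSemidef)
    (hdiag : ∀ i, M i i = 1)
    (V : Fin 4 → ℝ)
    (hC : (M - Matrix.vecMulVec V V).PosSemidef)
    (d : ℝ) (hd1 : M 0 1 = d) (hd2 : M 2 3 = d) :
    |V 0 + V 1 + V 2 - V 3| ≤ Real.sqrt (2 * (1 + d)) + Real.sqrt (2 * (1 - d)) := by
  have hsym : M.IsHermitian := hM.1
  have h10 : M 1 0 = d := by
    have := congrFun (congrFun hsym.eq 0) 1
    simpa [Matrix.conjTranspose, hd1] using this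
  have h32 : M 3 2 = d := by
    have := congrFun (congrFun hsym.eq 2) 3
    simpa [Matrix.conjTranspose, hd2] using this
  set x1 : Fin 4 → ℝ := ![1, 1, 0, 0] with hx1
  set x2 : Fin 4 → ℝ := ![0, 0, 1, -1] with hx2
  have q1 : x1 ⬝ᵥ M *ᵥ x1 = 2 * (1 + d) := by
    simp [hx1, Matrix.mulVec, dotProduct, Fin.sum_univ_four, hdiag, hd1, h10]
    ring
  have q2 : x2 ⬝ᵥ M *ᵥ x2 = 2 * (1 - d) := by
    simp [hx2, Matrix.mulVec, dotProduct, Fin.sum_univ_four, hdiag, hd2, h32]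
    ring
  have key : ∀ x : Fin 4 → ℝ, (V ⬝ᵥ x) ^ 2 ≤ x ⬝ᵥ M *ᵥ x := by
    intro x
    have h := hC.dotProduct_mulVec_nonneg x
    have hvv : x ⬝ᵥ Matrix.vecMulVec V V *ᵥ x = (V ⬝ᵥ x) ^ 2 := by
      simp [Matrix.vecMulVec, Matrix.mulVec, dotProduct, Fin.sum_univ_four]
      ring
    simp only [Matrix.sub_mulVec, dotProduct_sub, star_trivial] at h
    rw [hvv] at h
    linarith
  have k1 := key x1
  have k2 := key x2
  have e1 : V ⬝ᵥ x1 = V 0 + V 1 := by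
    simp [hx1, dotProduct, Fin.sum_univ_four]
  have e2 : V ⬝ᵥ x2 = V 2 - V 3 := by
    simp [hx2, dotProduct, Fin.sum_univ_four]
    ring
  rw [e1, q1] at k1
  rw [e2, q2] at k2
  have b1 : |V 0 + V 1| ≤ Real.sqrt (2 * (1 + d)) := by
    rw [← Real.sqrt_sq_eq_abs]
    exact Real.sqrt_le_sqrt k1
  have b2 : |V 2 - V 3| ≤ Real.sqrt (2 * (1 - d)) := by
    rw [← Real.sqrt_sq_eq_abs]
    exact Real.sqrt_le_sqrt k2
  calc |V 0 + V 1 + V 2 - V 3| = |(V 0 + V 1) + (V 2 - V 3)| := by ring_nf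
    _ ≤ |V 0 + V 1| + |V 2 - V 3| := abs_add_le _ _
    _ ≤ _ := add_le_add b1 b2
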